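/- Let F be a free group and g, h ∈ F. If g ≠ 1 and g * h * g⁻¹ and h generate an abelian subgroup and h ≠ 1, then g and h commute. -/

import Mathlib

set_option linter.unusedSectionVars false
set_option linter.unnecessarySimpa false
set_option maxHeartbeats 1000000

open List

namespace FreeGroupAux

variable {α : Type*} [DecidableEq α]

/-- The no-cancellation relation on letters. -/
def NC (p q : α × Bool) : Prop := ¬(p.1 = q.1 ∧ p.2 = !q.2)

/-- A word is reduced if it has no adjacent cancelling pair. -/
def IsRed (L : List (α × Bool)) : Prop := List.Chain' NC L

/-- A word is cyclically reduced. -/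
def IsCyc (L : List (α × Bool)) : Prop :=
  IsRed L ∧ ∀ p ∈ L.getLast?, ∀ q ∈ L.head?, NC p q

lemma norm_eq_length (x : FreeGroup α) : x.norm = x.toWord.length := rfl


lemma not_chain'_decomp {β : Type*} {R : β → β → Prop} :
    ∀ {L : List β}, ¬ List.Chain' R L →
      ∃ A p q B, L = A ++ p :: q :: B ∧ ¬ R p q := by
  intro L
  induction L with
  | nil => intro h; exact absurd List.isChain_nil h
  | cons x L ih =>
    intro h
    change ¬ List.IsChain R (x :: L) at h
    rw [List.isChain_cons] at h
    by_cases hhd : ∀ y ∈ L.head?, R x y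
    · have hL : ¬ List.Chain' R L := fun hc => h ⟨hhd, hc⟩
      obtain ⟨A, p, q, B, hAB, hpq⟩ := ih hL
      exact ⟨x :: A, p, q, B, by rw [hAB]; rfl, hpq⟩
    · push_neg at hhd
      obtain ⟨y, hy, hxy⟩ := hhd
      cases L with
      | nil => simp at hy
      | cons z L' =>
        simp only [List.head?_cons, Option.mem_some_iff] at hy
        subst hy
        exact ⟨[], x, z, L', rfl, hxy⟩

lemma isRed_of_reduce_eq {L : List (α × Bool)} (h : FreeGroup.reduce L = L) : IsRed L := by
  by_contra hc
  obtain ⟨A, p, q, B, hAB, hpq⟩ := not_chain'_decomp (R := NC) hc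
  unfold NC at hpq
  rw [not_not] at hpq
  obtain ⟨h1, h2⟩ := hpq
  have hq : q = (p.1, !p.2) := by
    cases p; cases q; simp_all
  refine FreeGroup.reduce.not (L₁ := L) (L₂ := A) (L₃ := B) (x := p.1) (b := p.2) ?_
  rw [h, hAB, hq]

lemma isRed_toWord (x : FreeGroup α) : IsRed x.toWord :=
  isRed_of_reduce_eq (FreeGroup.reduce_toWord x)

lemma reduce_eq_of_isRed {L : List (α × Bool)} (h : IsRed L) : FreeGroup.reduce L = L := by
  induction L with
  | nil => rfl
  | cons x L ih =>
    have hL : IsRed L := (List.isChain_cons.1 h).2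
    have hhd := (List.isChain_cons.1 h).1
    rw [FreeGroup.reduce.cons, ih hL]
    cases L with
    | nil => rfl
    | cons z L' =>
      have := hhd z (by simp)
      unfold NC at this
      simp only []
      rw [if_neg this]

lemma toWord_mk_of_isRed {L : List (α × Bool)} (h : IsRed L) :
    (FreeGroup.mk L).toWord = L := by
  rw [FreeGroup.toWord_mk, reduce_eq_of_isRed h]

lemma isRed_append_left {A B : List (α × Bool)} (h : IsRed (A ++ B)) : IsRed A :=
  (List.isChain_append.1 h).1

lemma isRed_append_right {A B : List (α × Bool)} (h : IsRed (A ++ B)) : IsRed B :=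
  (List.isChain_append.1 h).2.1

lemma toWord_mul (x y : FreeGroup α) :
    (x * y).toWord = FreeGroup.reduce (x.toWord ++ y.toWord) := by
  conv_lhs => rw [← FreeGroup.mk_toWord (x := x), ← FreeGroup.mk_toWord (x := y)]
  rw [FreeGroup.mul_mk, FreeGroup.toWord_mk]

-- assume part1 lemmas as axioms for quick dev (will inline later)
/-- Cyclically reduced decomposition. -/
lemma exists_cyc_decomp (x : FreeGroup α) :
    ∃ u d : FreeGroup α, x = u * d * u⁻¹ ∧ IsCyc d.toWord := by
  generalize hn : x.norm = n
  induction n using Nat.strong_induction_on generalizing x with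
  | _ n ih =>
  subst hn
  by_cases hcyc : ∀ p ∈ x.toWord.getLast?, ∀ q ∈ x.toWord.head?, NC p q
  · exact ⟨1, x, by group, isRed_toWord x, hcyc⟩
  · push_neg at hcyc
    obtain ⟨p, hp, q, hq, hpq⟩ := hcyc
    rw [NC, Decidable.not_not] at hpq
    set L := x.toWord with hL
    rw [Option.mem_def] at hp hq
    have hqhead : L = q :: L.tail := (List.cons_head?_tail hq).symm
    have htl_ne : L.tail ≠ [] := by
      intro h0
      have hLq : L = [q] := by rw [hqhead, h0]
      rw [hLq] at hp
      simp only [List.getLast?_singleton, Option.some.injEq] at hp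
      subst hp
      exact Bool.not_ne_self q.2 hpq.2.symm
    obtain ⟨z, T, hT⟩ := List.exists_cons_of_ne_nil htl_ne
    have hp' : L.tail.getLast? = some p := by
      rw [hqhead, hT, List.getLast?_cons_cons] at hp
      rw [hT]; exact hp
    have hp'' : L.tail.getLast htl_ne = p := by
      rw [List.getLast?_eq_getLast htl_ne, Option.some.injEq] at hp'
      exact hp'
    have hdecomp : L = q :: (L.tail.dropLast ++ [p]) := by
      conv_lhs => rw [hqhead]
      rw [← hp'', List.dropLast_append_getLast htl_ne]
    set M := L.tail.dropLast with hM
    have hq_eq : q = (p.1, !p.2) := by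
      rw [Prod.ext_iff]
      exact ⟨hpq.1.symm, by rw [hpq.2, Bool.not_not]⟩
    have hinv : FreeGroup.invRev [q] = [p] := by
      rw [hq_eq]
      cases p
      simp [FreeGroup.invRev]
    have hxmk : x = FreeGroup.mk [q] * FreeGroup.mk M * (FreeGroup.mk [q])⁻¹ := by
      rw [FreeGroup.inv_mk, hinv, FreeGroup.mul_mk, FreeGroup.mul_mk]
      conv_lhs => rw [← FreeGroup.mk_toWord (x := x)]
      congr 1
    have hMred : IsRed M := by
      have hredL : IsRed L := isRed_toWord x
      rw [hdecomp] at hredL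
      exact isRed_append_left ((List.isChain_cons.1 hredL).2)
    set y := FreeGroup.mk M with hy
    have hyW : y.toWord = M := toWord_mk_of_isRed hMred
    have hylt : y.norm < x.norm := by
      rw [norm_eq_length, norm_eq_length, hyW, ← hL, hdecomp]
      simp only [List.length_cons, List.length_append, List.length_nil]
      omega
    obtain ⟨u, d, hud, hcd⟩ := ih y.norm hylt y rfl
    refine ⟨FreeGroup.mk [q] * u, d, ?_, hcd⟩
    rw [hxmk, hud]
    group

lemma head?_flatten_replicate {L : List (α × Bool)} (hne : L ≠ []) (k : ℕ) (hk : k ≠ 0) :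
    (List.flatten (List.replicate k L)).head? = L.head? := by
  cases k with
  | zero => exact absurd rfl hk
  | succ k =>
    rw [List.replicate_succ, List.flatten_cons, List.head?_append]
    cases L with
    | nil => exact absurd rfl hne
    | cons a T => simp

lemma toWord_pow {d : FreeGroup α} (hd : IsCyc d.toWord) (k : ℕ) :
    (d ^ k).toWord = List.flatten (List.replicate k d.toWord) := by
  induction k with
  | zero => simp
  | succ k ih =>
    by_cases hne : d.toWord = []
    · have : d = 1 := by rwa [FreeGroup.toWord_eq_nil_iff] at hne
      simp [this]
    have hredflat : IsRed (d.toWord ++ List.flatten (List.replicate k d.toWord)) := by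
      rw [IsRed]
      change List.IsChain NC _
      rw [List.isChain_append]
      refine ⟨isRed_toWord d, ?_, ?_⟩
      · rw [← ih]; exact isRed_toWord _
      · intro p hp q hq
        rcases Nat.eq_zero_or_pos k with hk | hk
        · rw [hk] at hq; simp at hq
        · rw [head?_flatten_replicate hne k (Nat.pos_iff_ne_zero.1 hk)] at hq  -- fix maybe
          exact hd.2 p hp q hq
    rw [pow_succ', toWord_mul, ih, ← List.flatten_cons, ← List.replicate_succ]
    rw [List.replicate_succ, List.flatten_cons] at *
    exact reduce_eq_of_isRed hredflat

lemma norm_pow_cyc {d : FreeGroup α} (hd : IsCyc d.toWord) (k : ℕ) :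
    (d ^ k).norm = k * d.norm := by
  rw [norm_eq_length, toWord_pow hd k, List.length_flatten]
  simp [norm_eq_length, List.map_replicate, Nat.mul_comm]

lemma norm_zpow_cyc {d : FreeGroup α} (hd : IsCyc d.toWord) (N : ℤ) :
    (d ^ N).norm = N.natAbs * d.norm := by
  rcases Int.natAbs_eq N with h | h
  · rw [h, zpow_natCast, norm_pow_cyc hd]; simp [Int.natAbs_abs]
  · rw [h, zpow_neg, zpow_natCast, FreeGroup.norm_inv_eq, norm_pow_cyc hd]; simp [Int.natAbs_abs]

lemma norm_pow_le (w : FreeGroup α) (k : ℕ) : (w ^ k).norm ≤ k * w.norm := by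
  induction k with
  | zero => simp [FreeGroup.norm_one]
  | succ k ih =>
    rw [pow_succ]
    calc (w ^ k * w).norm ≤ (w ^ k).norm + w.norm := FreeGroup.norm_mul_le _ _
    _ ≤ k * w.norm + w.norm := by omega
    _ = (k + 1) * w.norm := by ring

lemma conj_zpow' (u y : FreeGroup α) (N : ℤ) : (u * y * u⁻¹) ^ N = u * y ^ N * u⁻¹ := by
  have h := map_zpow (MulAut.conj u) y N
  simpa [MulAut.conj_apply] using h.symm

lemma norm_conj_le (u y : FreeGroup α) :
    (u * y * u⁻¹).norm ≤ y.norm + 2 * u.norm := by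
  calc (u * y * u⁻¹).norm ≤ (u * y).norm + u⁻¹.norm := FreeGroup.norm_mul_le _ _
    _ ≤ u.norm + y.norm + u⁻¹.norm := by have := FreeGroup.norm_mul_le u y; omega
    _ = y.norm + 2 * u.norm := by rw [FreeGroup.norm_inv_eq]; ring

/-- zpow torsion-freeness -/
lemma zpow_eq_one_imp {x : FreeGroup α} {N : ℤ} (hN : N ≠ 0) (h : x ^ N = 1) : x = 1 := by
  obtain ⟨u, d, hud, hcd⟩ := exists_cyc_decomp x
  have hd1 : d ^ N = 1 := by
    have hxn : x ^ N = u * d ^ N * u⁻¹ := by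
      rw [hud, conj_zpow']
    rw [hxn] at h
    have : d ^ N = u⁻¹ * (u * d ^ N * u⁻¹) * u := by group
    rw [this, h]; group
  have := norm_zpow_cyc hcd N
  rw [hd1, FreeGroup.norm_one] at this
  have hdn : d.norm = 0 := by
    have hNa : N.natAbs ≠ 0 := Int.natAbs_ne_zero.mpr hN
    rcases Nat.mul_eq_zero.mp this.symm with h' | h'
    · exact absurd h' hNa
    · exact h' 
  have hd' : d = 1 := FreeGroup.norm_eq_zero.mp hdn
  rw [hud, hd']; group

/-- growth: 4C^2+2C < 16^C for C ≥ 1 -/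
lemma poly_lt_exp : ∀ C : ℕ, 1 ≤ C → 4 * C ^ 2 + 2 * C < 16 ^ C := by
  intro C hC
  induction C with
  | zero => omega
  | succ C ih =>
    rcases Nat.eq_zero_or_pos C with h0 | h1
    · subst h0; norm_num
    · have hih := ih h1
      have h16 : 16 ^ (C + 1) = 16 * 16 ^ C := by ring
      nlinarith [pow_pos (show 0 < 16 by norm_num) C]

lemma exists_big_k (A B : ℕ) : ∃ k : ℕ, 1 ≤ k ∧ A + B * k < 2 ^ (k - 1) := by
  set C := A + B + 1 with hC
  refine ⟨4 * C + 1, by omega, ?_⟩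
  have hA : A ≤ C := by omega
  have hB : B ≤ C := by omega
  have h1 : A + B * (4 * C + 1) ≤ 4 * C ^ 2 + 2 * C := by nlinarith
  have h2 := poly_lt_exp C (by omega)
  have h3 : 2 ^ (4 * C + 1 - 1) = 16 ^ C := by
    rw [show 4 * C + 1 - 1 = 4 * C by omega,
      show (16 : ℕ) = 2 ^ 4 by norm_num, ← pow_mul]
  omega

/-- binomial-ish: (a+1)^k ≥ a^k + 2^(k-1) for a ≥ 1, k ≥ 1 -/
lemma succ_pow_ge (a : ℕ) (ha : 1 ≤ a) : ∀ k : ℕ, 1 ≤ k →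
    a ^ k + 2 ^ (k - 1) ≤ (a + 1) ^ k := by
  intro k hk
  induction k with
  | zero => omega
  | succ k ih =>
    rcases Nat.eq_zero_or_pos k with h0 | h1
    · subst h0; simp
    · have hih := ih h1
      have hstep : (a + 1) ^ (k + 1) = (a + 1) ^ k * (a + 1) := by ring
      have h2 : 2 ^ (k + 1 - 1) = 2 ^ (k - 1) * 2 := by
        have : k + 1 - 1 = (k - 1) + 1 := by omega
        rw [this]; ring
      have hak : 1 ≤ a ^ k := Nat.one_le_pow _ _ (by omega)
      calc a ^ (k + 1) + 2 ^ (k + 1 - 1)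
          = a ^ k * a + 2 ^ (k - 1) * 2 := by rw [h2]; ring
        _ ≤ (a ^ k + 2 ^ (k - 1)) * (a + 1) := by
              have hY : 2 ^ (k - 1) * 1 ≤ 2 ^ (k - 1) * a := Nat.mul_le_mul_left _ ha
              nlinarith
        _ ≤ (a + 1) ^ k * (a + 1) := Nat.mul_le_mul_right _ hih
        _ = (a + 1) ^ (k + 1) := by ring

lemma conj_zpow_mul (w c : FreeGroup α) {n m : ℤ} (h : w * c ^ n * w⁻¹ = c ^ m) (t : ℤ) :
    w * c ^ (n * t) * w⁻¹ = c ^ (m * t) := by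
  have := conj_zpow' w (c ^ n) t
  rw [h, ← zpow_mul, ← zpow_mul] at this
  exact this.symm

lemma conj_iterate (w c : FreeGroup α) {n m : ℤ} (h : w * c ^ n * w⁻¹ = c ^ m) :
    ∀ k : ℕ, w ^ k * c ^ (n ^ k) * (w ^ k)⁻¹ = c ^ (m ^ k) := by
  intro k
  induction k with
  | zero => simp
  | succ k ih =>
    have step1 : w * c ^ (n * n ^ k) * w⁻¹ = c ^ (m * n ^ k) := conj_zpow_mul w c h (n ^ k)
    have step2 : w ^ k * c ^ (n ^ k * m) * (w ^ k)⁻¹ = c ^ (m ^ k * m) :=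
      conj_zpow_mul (w ^ k) c ih m
    have : w ^ (k + 1) * c ^ (n ^ (k + 1)) * (w ^ (k + 1))⁻¹
        = w ^ k * (w * c ^ (n * n ^ k) * w⁻¹) * (w ^ k)⁻¹ := by
      rw [pow_succ']
      rw [show n ^ (k + 1) = n * n ^ k by ring]
      group
    rw [this, step1, show m * n ^ k = n ^ k * m by ring, step2,
      show m ^ k * m = m ^ (k + 1) by ring]

/-- one-sided: can't conjugate a smaller power to a bigger power -/
lemma not_conj_lt (w c : FreeGroup α) (hc : c ≠ 1) {n m : ℤ}
    (h : w * c ^ n * w⁻¹ = c ^ m) (hlt : n.natAbs < m.natAbs) : False := by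
  obtain ⟨u, d, hud, hcd⟩ := exists_cyc_decomp c
  have hd1 : d ≠ 1 := by rintro rfl; apply hc; rw [hud]; group
  set Dn := d.norm with hDn
  have hDpos : 1 ≤ Dn := by
    have hne : d.norm ≠ 0 := fun h0 => hd1 (FreeGroup.norm_eq_zero.mp h0)
    omega
  set U := u.norm with hU
  set W := w.norm with hW
  -- c ^ N = u * d ^ N * u⁻¹
  have hcN : ∀ N : ℤ, c ^ N = u * d ^ N * u⁻¹ := fun N => by rw [hud, conj_zpow']
  have upper : ∀ N : ℤ, (c ^ N).norm ≤ N.natAbs * Dn + 2 * U := fun N => by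
    rw [hcN N]
    calc (u * d ^ N * u⁻¹).norm ≤ (d ^ N).norm + 2 * U := norm_conj_le u _
      _ = N.natAbs * Dn + 2 * U := by rw [norm_zpow_cyc hcd]
  have lower : ∀ N : ℤ, N.natAbs * Dn ≤ (c ^ N).norm + 2 * U := fun N => by
    have : d ^ N = u⁻¹ * c ^ N * u := by rw [hcN N]; group
    have h2 : d ^ N = u⁻¹ * c ^ N * (u⁻¹)⁻¹ := by rw [this]; group
    calc N.natAbs * Dn = (d ^ N).norm := (norm_zpow_cyc hcd N).symm
      _ ≤ (c ^ N).norm + 2 * u⁻¹.norm := h2 ▸ norm_conj_le u⁻¹ (c ^ N)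
      _ = (c ^ N).norm + 2 * U := by rw [FreeGroup.norm_inv_eq]
  set n' := n.natAbs with hn'
  set m' := m.natAbs with hm'
  -- key combined inequality for every k
  have key : ∀ k : ℕ, m' ^ k * Dn ≤ 4 * U + 2 * W * k + n' ^ k * Dn := by
    intro k
    have hiter := conj_iterate w c h k
    have hnp : (w ^ k).norm ≤ W * k := by
      have h' := norm_pow_le w k
      rw [← hW, Nat.mul_comm] at h'
      exact h'
    have h1 : (c ^ (m ^ k)).norm ≤ 2 * W * k + (c ^ (n ^ k)).norm := by
      calc (c ^ (m ^ k)).norm = (w ^ k * c ^ (n ^ k) * (w ^ k)⁻¹).norm := by rw [hiter]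
        _ ≤ (c ^ (n ^ k)).norm + 2 * (w ^ k).norm := norm_conj_le _ _
        _ ≤ (c ^ (n ^ k)).norm + 2 * (W * k) := by omega
        _ = 2 * W * k + (c ^ (n ^ k)).norm := by ring
    have h2 := lower (m ^ k)
    have h3 := upper (n ^ k)
    rw [Int.natAbs_pow, ← hm'] at h2
    rw [Int.natAbs_pow, ← hn'] at h3
    omega
  -- m' = 0 impossible
  have hm0 : m' ≠ 0 := by omega
  rcases Nat.lt_or_ge m' 2 with hm1 | hm2
  · -- m' = 1, n' = 0, so n = 0 and c^m = 1
    have hn0 : n = 0 := by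
      have : n' = 0 := by omega
      exact Int.natAbs_eq_zero.mp this
    have : c ^ m = 1 := by rw [← h, hn0]; group
    exact hc (zpow_eq_one_imp (by rwa [← Int.natAbs_ne_zero]) this)
  · -- m' ≥ 2
    obtain ⟨k, hk1, hkbig⟩ := exists_big_k (4 * U) (2 * W)
    have hpow : n' ^ k + 2 ^ (k - 1) ≤ m' ^ k := by
      have h1 : n' ^ k ≤ (m' - 1) ^ k := Nat.pow_le_pow_left (by omega) k
      have h2 := succ_pow_ge (m' - 1) (by omega) k hk1
      have h3 : m' - 1 + 1 = m' := by omega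
      rw [h3] at h2
      omega
    have hk := key k
    have hmul := Nat.mul_le_mul_right Dn hpow
    rw [Nat.add_mul] at hmul
    have e1 : 2 ^ (k - 1) * 1 ≤ 2 ^ (k - 1) * Dn := Nat.mul_le_mul_left _ hDpos
    rw [Nat.mul_one] at e1
    linarith [hk, hmul, e1, hkbig]

/-- distinct generators don't commute -/
lemma of_mul_of_ne {a b : α} (hab : a ≠ b) :
    FreeGroup.of a * FreeGroup.of b ≠ FreeGroup.of b * FreeGroup.of a := by
  intro h
  have h1 : (FreeGroup.of a * FreeGroup.of b).toWord = [(a, true), (b, true)] := by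
    have : FreeGroup.of a * FreeGroup.of b = FreeGroup.mk [(a, true), (b, true)] := by
      rw [show [(a, true), (b, true)] = [(a, true)] ++ [(b, true)] from rfl,
        ← FreeGroup.mul_mk]
      rfl
    rw [this, FreeGroup.toWord_mk]
    rw [FreeGroup.reduce.cons]
    simp [FreeGroup.reduce_singleton, hab]
  have h2 : (FreeGroup.of b * FreeGroup.of a).toWord = [(b, true), (a, true)] := by
    have : FreeGroup.of b * FreeGroup.of a = FreeGroup.mk [(b, true), (a, true)] := by
      rw [show [(b, true), (a, true)] = [(b, true)] ++ [(a, true)] from rfl,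
        ← FreeGroup.mul_mk]
      rfl
    rw [this, FreeGroup.toWord_mk]
    rw [FreeGroup.reduce.cons]
    simp [FreeGroup.reduce_singleton, hab.symm]
  rw [h] at h1
  rw [h1] at h2
  simp at h2
  exact hab h2.1

/-- constant chains are replicate -/
lemma chain'_eq_replicate {β : Type*} :
    ∀ (L : List β), List.Chain' Eq L → ∀ a, L.head? = some a → L = List.replicate L.length a := by
  intro L
  induction L with
  | nil => intro _ a h; simp at h
  | cons x L ih =>
    intro hch a ha
    simp only [List.head?_cons, Option.some.injEq] at ha
    subst ha
    rw [List.length_cons, List.replicate_succ]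
    congr 1
    cases L with
    | nil => simp
    | cons y L' =>
      have hxy : x = y := List.isChain_cons_cons.1 hch |>.1
      subst hxy
      exact ih (List.isChain_cons_cons.1 hch).2 x rfl

/-- every element of a free group on a subsingleton type is a power of any generator -/
lemma subsingleton_cyclic {β : Type*} [Subsingleton β] [DecidableEq β] (b : β)
    (x : FreeGroup β) : ∃ k : ℤ, x = FreeGroup.of b ^ k := by
  have hred : IsRed x.toWord := isRed_toWord x
  rcases hhead : x.toWord.head? with _ | p
  · -- empty word
    have : x.toWord = [] := by
      cases hx : x.toWord
      · rfl
      · rw [hx] at hhead; simp at hhead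
    exact ⟨0, by rwa [zpow_zero, ← FreeGroup.toWord_eq_nil_iff]⟩
  · have hch : List.Chain' Eq x.toWord := by
      refine List.IsChain.imp ?_ hred
      intro p q hpq
      have h1 : p.1 = q.1 := Subsingleton.elim _ _
      have h2 : p.2 = q.2 := by
        by_cases h : p.2 = q.2
        · exact h
        · exact absurd ⟨h1, by cases hp2 : p.2 <;> cases hq2 : q.2 <;> simp_all⟩ hpq
      exact Prod.ext h1 h2
    have hrep := chain'_eq_replicate x.toWord hch p hhead
    have hb : p.1 = b := Subsingleton.elim _ _
    obtain ⟨k, hk⟩ : ∃ k, x.toWord = List.replicate k p := ⟨_, hrep⟩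
    have hx : x = FreeGroup.mk (List.replicate k p) := by
      rw [← hk, FreeGroup.mk_toWord]
    have hofpow : ∀ j : ℕ, FreeGroup.of b ^ j = FreeGroup.mk (List.replicate j (b, true)) := by
      intro j
      conv_lhs => rw [← FreeGroup.mk_toWord (x := FreeGroup.of b ^ j)]
      rw [FreeGroup.toWord_of_pow]
    rcases hs : p.2 with _ | _
    · -- p.2 = false
      have hp : p = (b, false) := by rw [← hb, ← hs]
      refine ⟨-(k : ℤ), ?_⟩
      rw [zpow_neg, zpow_natCast, hofpow k, FreeGroup.inv_mk, hx, hp]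
      congr 1
      rw [FreeGroup.invRev]
      simp [List.map_replicate, List.reverse_replicate]
    · have hp : p = (b, true) := by rw [← hb, ← hs]
      refine ⟨(k : ℤ), ?_⟩
      rw [zpow_natCast, hofpow k, hx, hp]

/-- commuting elements generate an abelian subgroup -/
lemma closure_pair_comm {G : Type*} [Group G] {x y : G} (hxy : x * y = y * x) :
    ∀ a ∈ Subgroup.closure {x, y}, ∀ b ∈ Subgroup.closure {x, y}, a * b = b * a := by
  have hx : ∀ b ∈ Subgroup.closure {x, y}, x * b = b * x := by
    intro b hb
    induction hb using Subgroup.closure_induction with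
    | mem z hz =>
      simp only [Set.mem_insert_iff, Set.mem_singleton_iff] at hz
      rcases hz with rfl | rfl
      · rfl
      · exact hxy
    | one => simp
    | mul p q _ _ hp hq => rw [← mul_assoc, hp, mul_assoc, hq, mul_assoc]
    | inv p _ hp => exact (Commute.inv_right hp).eq  -- Commute x p → x * p⁻¹...
  have hy : ∀ b ∈ Subgroup.closure {x, y}, y * b = b * y := by
    intro b hb
    induction hb using Subgroup.closure_induction with
    | mem z hz =>
      simp only [Set.mem_insert_iff, Set.mem_singleton_iff] at hz
      rcases hz with rfl | rfl
      · exact hxy.symm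
      · rfl
    | one => simp
    | mul p q _ _ hp hq => rw [← mul_assoc, hp, mul_assoc, hq, mul_assoc]
    | inv p _ hp => exact (Commute.inv_right hp).eq
  intro a ha b hb
  induction ha using Subgroup.closure_induction with
  | mem z hz =>
      simp only [Set.mem_insert_iff, Set.mem_singleton_iff] at hz
      rcases hz with rfl | rfl
      · exact hx b hb
      · exact hy b hb
  | one => simp
  | mul p q _ _ hp hq => rw [mul_assoc, hq, ← mul_assoc, hp, mul_assoc]
  | inv p _ hp => exact (Commute.inv_left hp).eq

lemma exists_common_power {x y : FreeGroup α}
    (hab : ∀ a ∈ Subgroup.closure {x, y}, ∀ b ∈ Subgroup.closure {x, y}, a * b = b * a) :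
    ∃ c : FreeGroup α, (∃ p : ℤ, x = c ^ p) ∧ (∃ q : ℤ, y = c ^ q) := by
  set K := Subgroup.closure ({x, y} : Set (FreeGroup α)) with hK
  have hxK : x ∈ K := Subgroup.subset_closure (Set.mem_insert _ _)
  have hyK : y ∈ K := Subgroup.subset_closure (Set.mem_insert_of_mem _ rfl)
  let e : FreeGroup (IsFreeGroup.Generators ↥K) ≃* ↥K := IsFreeGroup.mulEquiv ↥K
  haveI : DecidableEq (IsFreeGroup.Generators ↥K) := Classical.decEq _
  haveI hsub : Subsingleton (IsFreeGroup.Generators ↥K) := by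
    constructor
    intro a b
    by_contra hne
    apply of_mul_of_ne hne
    apply e.injective
    rw [map_mul, map_mul]
    apply Subtype.ext
    push_cast
    exact hab _ (e (FreeGroup.of a)).2 _ (e (FreeGroup.of b)).2
  rcases isEmpty_or_nonempty (IsFreeGroup.Generators ↥K) with hem | hne
  · -- K is trivial
    have htriv : ∀ z, z ∈ K → z = 1 := by
      intro z hz
      have h1 : e.symm ⟨z, hz⟩ = e.symm ⟨1, K.one_mem⟩ := Subsingleton.elim _ _
      have h2 := congrArg e h1
      simp only [MulEquiv.apply_symm_apply] at h2
      exact congrArg Subtype.val h2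
    exact ⟨1, ⟨0, by rw [zpow_zero]; exact htriv x hxK⟩,
      ⟨0, by rw [zpow_zero]; exact htriv y hyK⟩⟩
  · obtain ⟨b⟩ := hne
    refine ⟨((e (FreeGroup.of b) : ↥K) : FreeGroup α), ?_, ?_⟩
    · obtain ⟨k, hk⟩ := subsingleton_cyclic b (e.symm ⟨x, hxK⟩)
      refine ⟨k, ?_⟩
      have h2 : (⟨x, hxK⟩ : ↥K) = e (FreeGroup.of b) ^ k := by
        rw [← map_zpow, ← hk, MulEquiv.apply_symm_apply]
      have h3 := congrArg Subtype.val h2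
      push_cast at h3
      exact h3
    · obtain ⟨k, hk⟩ := subsingleton_cyclic b (e.symm ⟨y, hyK⟩)
      refine ⟨k, ?_⟩
      have h2 : (⟨y, hyK⟩ : ↥K) = e (FreeGroup.of b) ^ k := by
        rw [← map_zpow, ← hk, MulEquiv.apply_symm_apply]
      have h3 := congrArg Subtype.val h2
      push_cast at h3
      exact h3

lemma conj_eq_inv_imp_trivial (w x : FreeGroup α) (h : w * x * w⁻¹ = x⁻¹) : x = 1 := by
  by_contra hx
  have hcomm : (w * w) * x = x * (w * w) := by
    have h1 : w * (w * x * w⁻¹) * w⁻¹ = x := by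
      rw [h]
      have h0 : w * x⁻¹ * w⁻¹ = (w * x * w⁻¹)⁻¹ := by group
      rw [h0, h, inv_inv]
    have hww : (w * w) * x * (w * w)⁻¹ = x := by
      conv_rhs => rw [← h1]
      group
    calc (w * w) * x = ((w * w) * x * (w * w)⁻¹) * (w * w) := by group
      _ = x * (w * w) := by rw [hww]
  obtain ⟨c, ⟨p, hp⟩, ⟨q, hq⟩⟩ := exists_common_power (closure_pair_comm hcomm)
  have hq0 : q ≠ 0 := by rintro rfl; exact hx (by rwa [zpow_zero] at hq)
  have hc1 : c ≠ 1 := by rintro rfl; exact hx (by rwa [one_zpow] at hq)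
  have h1 : w * c ^ q * w⁻¹ = c ^ (-q) := by
    rw [← hq, zpow_neg, ← hq, h]
  have h2 : w * c ^ p * w⁻¹ = c ^ p := by
    rw [← hp]
    have : w * (w * w) * w⁻¹ = w * w := by group
    exact this
  have e1 := conj_zpow_mul w c h1 p
  have e2 := conj_zpow_mul w c h2 q
  rw [show q * p = p * q by ring] at e1
  rw [e2] at e1
  have e3 : c ^ (p * q) = (c ^ (p * q))⁻¹ := by
    conv_lhs => rw [e1, show -q * p = -(p * q) from by ring, zpow_neg]
  have : c ^ (2 * (p * q)) = 1 := by
    rw [show 2 * (p * q) = p * q + p * q by ring, zpow_add]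
    nth_rewrite 2 [e3]
    simp
  have hpq : 2 * (p * q) = 0 := by
    by_contra h0
    exact hc1 (zpow_eq_one_imp h0 this)
  have hp0 : p = 0 := by
    rcases mul_eq_zero.mp hpq with h' | h'
    · norm_num at h'
    · rcases mul_eq_zero.mp h' with h'' | h''
      · exact h''
      · exact absurd h'' hq0
  have hw1 : w = 1 := by
    have : w ^ (2 : ℤ) = 1 := by
      rw [hp0, zpow_zero] at hp
      rw [show (2 : ℤ) = 1 + 1 by ring, zpow_add, zpow_one, ← hp]
    exact zpow_eq_one_imp (by norm_num) this
  have hxinv : x = x⁻¹ := by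
    rw [hw1, one_mul, inv_one, mul_one] at h
    exact h
  have hxx : x * x = 1 := by
    nth_rewrite 2 [hxinv]
    simp
  have hx2 : x ^ (2 : ℤ) = 1 := by
    rw [show (2 : ℤ) = 1 + 1 by ring, zpow_add, zpow_one, hxx]
  exact hx (zpow_eq_one_imp (by norm_num) hx2)

lemma conj_zpow_eq (w c : FreeGroup α) (hc : c ≠ 1) {n m : ℤ}
    (h : w * c ^ n * w⁻¹ = c ^ m) : m = n := by
  have h' : w⁻¹ * c ^ m * (w⁻¹)⁻¹ = c ^ n := by
    rw [← h]; group
  have habs : n.natAbs = m.natAbs := by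
    rcases Nat.lt_or_ge n.natAbs m.natAbs with hlt | hge
    · exact absurd hlt (fun hl => not_conj_lt w c hc h hl)
    · rcases Nat.lt_or_ge m.natAbs n.natAbs with hlt' | hge'
      · exact absurd (not_conj_lt w⁻¹ c hc h' hlt') (fun f => f)
      · omega
  rcases Int.natAbs_eq_natAbs_iff.mp habs with he | he
  · exact he.symm
  · -- n = -m : then w c^n w⁻¹ = (c^n)⁻¹
    have hinv : w * c ^ n * w⁻¹ = (c ^ n)⁻¹ := by
      rw [h, he, zpow_neg, inv_inv]
    have := conj_eq_inv_imp_trivial w (c ^ n) hinv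
    have hn0 : n = 0 := by
      by_contra h0
      exact hc (zpow_eq_one_imp h0 this)
    omega

end FreeGroupAux


theorem stmt_15 {α : Type*} (g h : FreeGroup α) (hg : g ≠ 1) (hh : h ≠ 1)
    (hab : ∀ x ∈ Subgroup.closure {g * h * g⁻¹, h}, ∀ y ∈ Subgroup.closure {g * h * g⁻¹, h},
      x * y = y * x) :
    g * h = h * g := by
  letI : DecidableEq α := Classical.decEq α
  obtain ⟨c, ⟨p, hp⟩, ⟨q, hq⟩⟩ := FreeGroupAux.exists_common_power hab
  have hc1 : c ≠ 1 := by rintro rfl; exact hh (by rwa [one_zpow] at hq)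
  have hconj : g * c ^ q * g⁻¹ = c ^ p := by rw [← hq, hp]
  have hpq := FreeGroupAux.conj_zpow_eq g c hc1 hconj
  have : g * h * g⁻¹ = h := by rw [hp, hpq, ← hq]
  calc g * h = (g * h * g⁻¹) * g := by group
    _ = h * g := by rw [this]
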